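/- Let x be a real number with x > 0. Suppose F : ℂ → ℂ is complex-differentiable at every point w ≠ 1 and satisfies F(w) = ∑_{n=0}^∞ (n + x)^(−w) for all complex w with Re(w) > 1. Then exp(−F′(0)) = √(2π)/Γ(x). -/

import Mathlib

open Complex Filter Topology Set

namespace LerchAux

/-- The trapezoid-corrected term of the Hurwitz zeta series. -/
noncomputable def psi (x : ℝ) (n : ℕ) (s : ℂ) : ℂ :=
  ((((n : ℝ) + x : ℝ) : ℂ) ^ (-s) + (((n : ℝ) + x + 1 : ℝ) : ℂ) ^ (-s)) / 2
    - ((((n : ℝ) + x : ℝ) : ℂ) ^ (1 - s) - (((n : ℝ) + x + 1 : ℝ) : ℂ) ^ (1 - s)) / (s - 1)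

lemma hasDerivAt_ofReal_cpow_const' {t : ℝ} (ht : 0 < t) (c : ℂ) :
    HasDerivAt (fun u : ℝ => ((u : ℝ) : ℂ) ^ c) (c * (t : ℂ) ^ (c - 1)) t := by
  have h0 : HasDerivAt (fun z : ℂ => z ^ c) (c * (t : ℂ) ^ (c - 1)) ((t : ℝ) : ℂ) :=
    (Complex.hasStrictDerivAt_cpow_const (Complex.ofReal_mem_slitPlane.2 ht)).hasDerivAt
  exact h0.comp_ofReal

lemma psi_integral (x : ℝ) (hx : 0 < x) (n : ℕ) (s : ℂ) (hs1 : s ≠ 1) :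
    psi x n s = -∫ t in ((n : ℝ) + x)..((n : ℝ) + x + 1),
      ((((t - ((n : ℝ) + x)) ^ 2 - (t - ((n : ℝ) + x))) / 2 : ℝ) : ℂ) *
        (s * (s + 1) * ((t : ℝ) : ℂ) ^ (-s - 2)) := by
  set a : ℝ := (n : ℝ) + x with ha_def
  have ha : 0 < a := by positivity
  set A : ℝ → ℂ := fun t => (((t - a) ^ 2 - (t - a)) / 2 : ℝ) * (-s * ((t : ℝ) : ℂ) ^ (-s - 1))
      - ((t - a - 1/2 : ℝ) : ℂ) * ((t : ℝ) : ℂ) ^ (-s) + ((t : ℝ) : ℂ) ^ (1 - s) / (1 - s)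
    with hA_def
  have key : ∀ t ∈ Set.uIcc a (a + 1), HasDerivAt A
      ((((t - a) ^ 2 - (t - a)) / 2 : ℝ) * (s * (s + 1) * ((t : ℝ) : ℂ) ^ (-s - 2))) t := by
    intro t ht
    rw [Set.uIcc_of_le (by linarith)] at ht
    have ht0 : 0 < t := lt_of_lt_of_le ha ht.1
    have hP : HasDerivAt (fun u : ℝ => (((u - a) ^ 2 - (u - a)) / 2 : ℝ)) (t - a - 1/2) t := by
      have := ((((hasDerivAt_id t).sub_const a).pow 2).sub ((hasDerivAt_id t).sub_const a)).div_const 2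
      refine this.congr_deriv ?_; simp only [id_eq]; ring
    have hPC : HasDerivAt (fun u : ℝ => ((((u - a) ^ 2 - (u - a)) / 2 : ℝ) : ℂ))
        (((t - a - 1/2 : ℝ) : ℂ)) t := hP.ofReal_comp
    have hPC' : HasDerivAt (fun u : ℝ => ((u - a - 1/2 : ℝ) : ℂ)) 1 t := by
      have : HasDerivAt (fun u : ℝ => (u - a - 1/2 : ℝ)) 1 t :=
        ((hasDerivAt_id t).sub_const a).sub_const (1/2)
      simpa using this.ofReal_comp
    have hc1 : HasDerivAt (fun u : ℝ => ((u : ℝ) : ℂ) ^ (-s - 1))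
        ((-s - 1) * (t : ℂ) ^ (-s - 2)) t := by
      have := hasDerivAt_ofReal_cpow_const' ht0 (-s - 1)
      convert this using 2; ring
    have hc0 : HasDerivAt (fun u : ℝ => ((u : ℝ) : ℂ) ^ (-s))
        ((-s) * (t : ℂ) ^ (-s - 1)) t := hasDerivAt_ofReal_cpow_const' ht0 (-s)
    have hc2 : HasDerivAt (fun u : ℝ => ((u : ℝ) : ℂ) ^ (1 - s))
        ((1 - s) * (t : ℂ) ^ (-s)) t := by
      have := hasDerivAt_ofReal_cpow_const' ht0 (1 - s)
      convert this using 2; ring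
    have := ((hPC.mul (hc1.const_mul (-s))).sub (hPC'.mul hc0)).add (hc2.div_const (1 - s))
    refine this.congr_deriv ?_
    have h1s : (1 - s) ≠ 0 := by
      intro h; apply hs1; linear_combination -h
    field_simp
    push_cast
    ring
  have hcont : ContinuousOn (fun t : ℝ => (((t - a) ^ 2 - (t - a)) / 2 : ℝ) *
      (s * (s + 1) * ((t : ℝ) : ℂ) ^ (-s - 2)) : ℝ → ℂ) (Set.uIcc a (a + 1)) := by
    intro t ht
    rw [Set.uIcc_of_le (by linarith)] at ht
    have ht0 : 0 < t := lt_of_lt_of_le ha ht.1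
    apply ContinuousAt.continuousWithinAt
    have : ContinuousAt (fun u : ℝ => ((u : ℝ) : ℂ) ^ (-s - 2)) t :=
      (hasDerivAt_ofReal_cpow_const' ht0 (-s - 2)).continuousAt
    fun_prop
  have hint := intervalIntegral.integral_eq_sub_of_hasDerivAt key
    (hcont.intervalIntegrable)
  rw [hint]
  have h1s : (1 - s) ≠ 0 := by intro h; apply hs1; linear_combination -h
  have hs1' : s - 1 ≠ 0 := sub_ne_zero.2 hs1
  simp only [hA_def, psi, ← ha_def]
  have e1 : ((a + 1 - a - 1/2 : ℝ) : ℂ) = 1/2 := by norm_num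
  have e2 : ((a - a - 1/2 : ℝ) : ℂ) = -(1/2) := by norm_num
  have e3 : (((a + 1 - a) ^ 2 - (a + 1 - a)) / 2 : ℝ) = 0 := by norm_num
  have e4 : (((a - a) ^ 2 - (a - a)) / 2 : ℝ) = 0 := by norm_num
  rw [e1, e2, e3, e4]
  push_cast
  field_simp
  ring

lemma psi_bound (x : ℝ) (hx : 0 < x) (n : ℕ) (s : ℂ) (hs1 : s ≠ 1) (hs2 : -2 ≤ s.re) :
    ‖psi x n s‖ ≤ ‖s‖ * ‖s + 1‖ / 8 * ((n : ℝ) + x) ^ (-s.re - 2) := by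
  set a : ℝ := (n : ℝ) + x with ha_def
  have ha : 0 < a := by positivity
  rw [psi_integral x hx n s hs1, norm_neg, show ((n : ℝ) + x) = a from ha_def.symm]
  have hb : ∀ t ∈ Set.uIoc a (a + 1),
      ‖((((t - a) ^ 2 - (t - a)) / 2 : ℝ) : ℂ) * (s * (s + 1) * ((t : ℝ) : ℂ) ^ (-s - 2))‖
        ≤ ‖s‖ * ‖s + 1‖ / 8 * a ^ (-s.re - 2) := by
    intro t ht
    rw [Set.uIoc_of_le (by linarith)] at ht
    have ht0 : 0 < t := lt_trans ha ht.1
    have h1 : ‖((((t - a) ^ 2 - (t - a)) / 2 : ℝ) : ℂ)‖ ≤ 1 / 8 := by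
      rw [Complex.norm_real, Real.norm_eq_abs, abs_div, show |(2:ℝ)| = 2 by norm_num]
      have h₁ : 0 ≤ t - a := le_of_lt (by linarith [ht.1])
      have h₂ : t - a ≤ 1 := by linarith [ht.2]
      have h₃ : |(t - a) ^ 2 - (t - a)| ≤ 1 / 4 := by
        rw [abs_le]; constructor <;> nlinarith [sq_nonneg (t - a - 1/2), sq_nonneg (t - a)]
      linarith
    have h2 : ‖((t : ℝ) : ℂ) ^ (-s - 2)‖ ≤ a ^ (-s.re - 2) := by
      rw [Complex.norm_cpow_eq_rpow_re_of_pos ht0]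
      have : (-s - 2).re = -s.re - 2 := by simp
      rw [this]
      exact Real.rpow_le_rpow_of_nonpos ha (le_of_lt ht.1) (by linarith)
    calc ‖((((t - a) ^ 2 - (t - a)) / 2 : ℝ) : ℂ) * (s * (s + 1) * ((t : ℝ) : ℂ) ^ (-s - 2))‖
        = ‖((((t - a) ^ 2 - (t - a)) / 2 : ℝ) : ℂ)‖ * (‖s‖ * ‖s + 1‖
            * ‖((t : ℝ) : ℂ) ^ (-s - 2)‖) := by
          simp [norm_mul]
      _ ≤ (1 / 8) * (‖s‖ * ‖s + 1‖ * (a ^ (-s.re - 2))) := by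
          apply mul_le_mul h1 _ (by positivity) (by norm_num)
          apply mul_le_mul_of_nonneg_left h2 (by positivity)
      _ = ‖s‖ * ‖s + 1‖ / 8 * a ^ (-s.re - 2) := by ring
  have h := intervalIntegral.norm_integral_le_of_norm_le_const hb
  have h1 : |a + 1 - a| = 1 := by simp
  rw [h1, mul_one] at h
  exact h

noncomputable def psid (x : ℝ) (n : ℕ) : ℝ :=
  (((n : ℝ) + x + 1) * Real.log ((n : ℝ) + x + 1) - ((n : ℝ) + x) * Real.log ((n : ℝ) + x))
    - (Real.log ((n : ℝ) + x) + Real.log ((n : ℝ) + x + 1)) / 2 - 1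

lemma summable_rpow_shift {x : ℝ} (hx : 0 < x) {p : ℝ} (hp : 1 < p) :
    Summable (fun n : ℕ => ((n : ℝ) + x) ^ (-p)) := by
  rw [← summable_nat_add_iff 1]
  have h1 : Summable (fun n : ℕ => ((n : ℝ) + 1) ^ (-p)) := by
    have h0 : Summable (fun n : ℕ => ((n : ℝ)) ^ (-p)) :=
      Real.summable_nat_rpow.2 (by linarith)
    have := (summable_nat_add_iff 1).2 h0
    refine this.congr fun n => ?_
    push_cast; ring_nf
  refine Summable.of_nonneg_of_le (fun n => ?_) (fun n => ?_) h1
  · positivity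
  · have hb : (0:ℝ) < (n:ℝ) + 1 := by positivity
    have : ((n:ℝ) + 1) ≤ ((n + 1 : ℕ) : ℝ) + x := by push_cast; linarith
    exact Real.rpow_le_rpow_of_nonpos hb this (by linarith)

lemma rpow_le_add {c : ℝ} (hc : 0 < c) {lo e hi : ℝ} (h1 : lo ≤ e) (h2 : e ≤ hi) :
    c ^ e ≤ c ^ lo + c ^ hi := by
  rcases le_or_gt 1 c with h | h
  · have : c ^ e ≤ c ^ hi := Real.rpow_le_rpow_of_exponent_le h h2
    have hpos : (0:ℝ) ≤ c ^ lo := by positivity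
    linarith
  · have : c ^ e ≤ c ^ lo := Real.rpow_le_rpow_of_exponent_ge hc (le_of_lt h) h1
    have hpos : (0:ℝ) ≤ c ^ hi := by positivity
    linarith

lemma psi_differentiableAt {x : ℝ} (hx : 0 < x) (n : ℕ) {s : ℂ} (hs1 : s ≠ 1) :
    DifferentiableAt ℂ (psi x n) s := by
  have hA : (((n : ℝ) + x : ℝ) : ℂ) ≠ 0 := by
    simp only [ne_eq, Complex.ofReal_eq_zero]; positivity
  have hB : (((n : ℝ) + x + 1 : ℝ) : ℂ) ≠ 0 := by
    simp only [ne_eq, Complex.ofReal_eq_zero]; positivity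
  have d1 : DifferentiableAt ℂ (fun s : ℂ => (((n : ℝ) + x : ℝ) : ℂ) ^ (-s)) s :=
    (differentiable_neg.differentiableAt).const_cpow (Or.inl hA)
  have d2 : DifferentiableAt ℂ (fun s : ℂ => (((n : ℝ) + x + 1 : ℝ) : ℂ) ^ (-s)) s :=
    (differentiable_neg.differentiableAt).const_cpow (Or.inl hB)
  have d3 : DifferentiableAt ℂ (fun s : ℂ => (((n : ℝ) + x : ℝ) : ℂ) ^ (1 - s)) s :=
    ((differentiable_const (1:ℂ)).sub differentiable_id).differentiableAt.const_cpow (Or.inl hA)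
  have d4 : DifferentiableAt ℂ (fun s : ℂ => (((n : ℝ) + x + 1 : ℝ) : ℂ) ^ (1 - s)) s :=
    ((differentiable_const (1:ℂ)).sub differentiable_id).differentiableAt.const_cpow (Or.inl hB)
  exact (((d1.add d2).div_const 2).sub ((d3.sub d4).div
    ((differentiableAt_id.sub (differentiableAt_const 1))) (sub_ne_zero.2 hs1)))

lemma psi_hasDerivAt_zero {x : ℝ} (hx : 0 < x) (n : ℕ) :
    HasDerivAt (psi x n) ((psid x n : ℝ) : ℂ) 0 := by
  set a : ℝ := (n : ℝ) + x with ha_def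
  have ha : 0 < a := by positivity
  have hb : 0 < a + 1 := by linarith
  have hA : ((a : ℝ) : ℂ) ≠ 0 := by simp only [ne_eq, Complex.ofReal_eq_zero]; positivity
  have hB : ((a + 1 : ℝ) : ℂ) ≠ 0 := by simp only [ne_eq, Complex.ofReal_eq_zero]; positivity
  have hneg : HasDerivAt (fun s : ℂ => -s) (-1) (0 : ℂ) := (hasDerivAt_id (0:ℂ)).neg
  have hones : HasDerivAt (fun s : ℂ => 1 - s) (-1) (0 : ℂ) := by
    simpa using ((hasDerivAt_id (0:ℂ)).const_sub 1)
  have h1 : HasDerivAt (fun s : ℂ => ((a : ℝ) : ℂ) ^ (-s))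
      (-Complex.log a) 0 := by
    have := hneg.const_cpow (c := ((a : ℝ) : ℂ)) (Or.inl hA)
    simpa using this
  have h2 : HasDerivAt (fun s : ℂ => ((a + 1 : ℝ) : ℂ) ^ (-s))
      (-Complex.log (a + 1)) 0 := by
    have := hneg.const_cpow (c := ((a + 1 : ℝ) : ℂ)) (Or.inl hB)
    simpa using this
  have h3 : HasDerivAt (fun s : ℂ => ((a : ℝ) : ℂ) ^ (1 - s))
      (-((a : ℂ) * Complex.log a)) 0 := by
    have := hones.const_cpow (c := ((a : ℝ) : ℂ)) (Or.inl hA)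
    simpa [Complex.cpow_one] using this
  have h4 : HasDerivAt (fun s : ℂ => ((a + 1 : ℝ) : ℂ) ^ (1 - s))
      (-(((a : ℂ) + 1) * Complex.log (a + 1))) 0 := by
    have := hones.const_cpow (c := ((a + 1 : ℝ) : ℂ)) (Or.inl hB)
    simpa [Complex.cpow_one] using this
  have hv : HasDerivAt (fun s : ℂ => s - 1) 1 (0 : ℂ) := (hasDerivAt_id (0:ℂ)).sub_const 1
  have hden : ((0 : ℂ) - 1) ≠ 0 := by norm_num
  have H := (((h1.add h2).div_const 2).sub ((h3.sub h4).div hv hden))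
  have hval : ((a:ℝ):ℂ) ^ ((1:ℂ) - 0) = (a:ℂ) := by simp [Complex.cpow_one]
  have hval2 : ((a+1:ℝ):ℂ) ^ ((1:ℂ) - 0) = (a:ℂ) + 1 := by push_cast; simp [Complex.cpow_one]
  have heq : psi x n = (fun s : ℂ =>
      (((a : ℝ) : ℂ) ^ (-s) + ((a + 1 : ℝ) : ℂ) ^ (-s)) / 2
      - (((a : ℝ) : ℂ) ^ (1 - s) - ((a + 1 : ℝ) : ℂ) ^ (1 - s)) / (s - 1)) := by
    funext s; rw [psi]
  rw [heq]
  refine H.congr_deriv ?_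
  have hla : Complex.log ((a : ℝ) : ℂ) = ((Real.log a : ℝ) : ℂ) :=
    (Complex.ofReal_log ha.le).symm
  have hlb : Complex.log (((a : ℝ) : ℂ) + 1) = ((Real.log (a + 1) : ℝ) : ℂ) := by
    rw [show ((a : ℝ) : ℂ) + 1 = ((a + 1 : ℝ) : ℂ) by push_cast; ring]
    exact (Complex.ofReal_log hb.le).symm
  simp only [Pi.sub_apply]
  rw [psid, ← ha_def, hval, hval2, hla, hlb]
  push_cast
  ring

noncomputable def ff (x : ℝ) (s : ℂ) (n : ℕ) : ℂ := (((n : ℝ) + x : ℝ) : ℂ) ^ (-s)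
noncomputable def gg (x : ℝ) (s : ℂ) (n : ℕ) : ℂ := (((n : ℝ) + x : ℝ) : ℂ) ^ (1 - s) / (s - 1)

lemma cast_succ (x : ℝ) (n : ℕ) : (((n + 1 : ℕ) : ℝ) + x : ℝ) = (n : ℝ) + x + 1 := by
  push_cast; ring

lemma psi_eq (x : ℝ) (s : ℂ) (n : ℕ) :
    psi x n s = (ff x s n + ff x s (n + 1)) / 2 - (gg x s n - gg x s (n + 1)) := by
  simp only [psi, ff, gg, cast_succ]
  ring

lemma summable_ff {x : ℝ} (hx : 0 < x) {s : ℂ} (hs : 1 < s.re) : Summable (ff x s) := by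
  apply Summable.of_norm
  have h : ∀ n : ℕ, ‖ff x s n‖ = ((n : ℝ) + x) ^ (-s.re) := by
    intro n
    rw [ff, Complex.norm_cpow_eq_rpow_re_of_pos (by positivity)]
    simp
  simp only [h]
  exact summable_rpow_shift hx hs

lemma summable_psi {x : ℝ} (hx : 0 < x) {s : ℂ} (hs1 : s ≠ 1) (hs2 : -1 < s.re) :
    Summable (fun n => psi x n s) := by
  apply Summable.of_norm_bounded
    (((summable_rpow_shift hx (show (1:ℝ) < s.re + 2 by linarith)).mul_left
      (‖s‖ * ‖s + 1‖ / 8)).congr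
      (fun n => by rw [show -(s.re + 2) = -s.re - 2 by ring]))
  intro n
  exact psi_bound x hx n s hs1 (by linarith)

lemma tendsto_gg {x : ℝ} (hx : 0 < x) {s : ℂ} (hs : 1 < s.re) :
    Tendsto (fun n : ℕ => gg x s n) atTop (𝓝 0) := by
  rw [tendsto_zero_iff_norm_tendsto_zero]
  have h : ∀ n : ℕ, ‖gg x s n‖ = ((n : ℝ) + x) ^ (-(s.re - 1)) / ‖s - 1‖ := by
    intro n
    rw [gg, norm_div]
    rw [Complex.norm_cpow_eq_rpow_re_of_pos (by positivity),
      show (1 - s).re = -(s.re - 1) by rw [Complex.sub_re, Complex.one_re]; ring]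
  simp only [h]
  have h2 : Tendsto (fun n : ℕ => (n : ℝ) + x) atTop atTop :=
    tendsto_atTop_add_const_right _ x tendsto_natCast_atTop_atTop
  have h3 := ((tendsto_rpow_neg_atTop (show (0:ℝ) < s.re - 1 by linarith)).comp h2).div_const
    (‖s - 1‖)
  simpa using h3

lemma hasSum_gg_sub {x : ℝ} (hx : 0 < x) {s : ℂ} (hs1 : s ≠ 1) (hs : 1 < s.re) :
    HasSum (fun n => gg x s n - gg x s (n + 1)) (gg x s 0) := by
  have hsum : Summable (fun n => gg x s n - gg x s (n + 1)) := by
    have := (summable_psi hx hs1 (by linarith)).neg.add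
      (((summable_ff hx hs).add ((summable_nat_add_iff 1).2 (summable_ff hx hs))).div_const 2)
    refine this.congr fun n => ?_
    simp only [Pi.add_apply, Pi.neg_apply, psi_eq x s n]
    ring
  have h1 := hsum.hasSum
  have h2 := h1.tendsto_sum_nat
  have h3 : ∀ N : ℕ, ∑ n ∈ Finset.range N, (gg x s n - gg x s (n + 1))
      = gg x s 0 - gg x s N := by
    intro N
    exact Finset.sum_range_sub' (fun n => gg x s n) N
  rw [funext h3] at h2
  have h4 : Tendsto (fun N : ℕ => gg x s 0 - gg x s N) atTop (𝓝 (gg x s 0 - 0)) :=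
    tendsto_const_nhds.sub (tendsto_gg hx hs)
  rw [sub_zero] at h4
  rwa [tendsto_nhds_unique h2 h4] at h1

lemma hasSum_psi {x : ℝ} (hx : 0 < x) {s : ℂ} (hs : 1 < s.re) {Z : ℂ}
    (hZ : HasSum (ff x s) Z) :
    HasSum (fun n => psi x n s)
      (Z - ((x : ℝ) : ℂ) ^ (-s) / 2 - ((x : ℝ) : ℂ) ^ (1 - s) / (s - 1)) := by
  have hs1 : s ≠ 1 := by
    intro h; rw [h] at hs; simp at hs
  have hshift : HasSum (fun n => ff x s (n + 1)) (Z - ff x s 0) := by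
    rw [hasSum_nat_add_iff 1]
    simpa using hZ
  have H := ((hZ.add hshift).div_const 2).sub (hasSum_gg_sub hx hs1 hs)
  have heq : (fun n => psi x n s)
      = fun n => (ff x s n + ff x s (n + 1)) / 2 - (gg x s n - gg x s (n + 1)) :=
    funext (psi_eq x s)
  rw [heq]
  convert H using 1
  · rfl
  have hff0 : ff x s 0 = ((x : ℝ) : ℂ) ^ (-s) := by rw [ff]; norm_num
  have hgg0 : gg x s 0 = ((x : ℝ) : ℂ) ^ (1 - s) / (s - 1) := by rw [gg]; norm_num
  rw [hff0, hgg0]; ring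

/-- The domain of analytic continuation. -/
def U : Set ℂ := {s : ℂ | -(1/4 : ℝ) < s.re} \ {1}

lemma isOpen_U : IsOpen U :=
  (isOpen_lt continuous_const Complex.continuous_re).sdiff isClosed_singleton

lemma mem_U_of_one_lt {s : ℂ} (hs : 1 < s.re) : s ∈ U := by
  constructor
  · simp only [mem_setOf_eq]; linarith
  · simp only [mem_singleton_iff]
    intro h; rw [h] at hs; simp at hs

lemma ball_subset_U : Metric.ball (0 : ℂ) (1/4) ⊆ U := by
  intro w hw
  rw [Metric.mem_ball, dist_zero_right] at hw
  constructor
  · simp only [mem_setOf_eq]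
    have := Complex.abs_re_le_norm w
    have : |w.re| < 1/4 := lt_of_le_of_lt (Complex.abs_re_le_norm w) hw
    have := abs_lt.1 this
    linarith [this.1]
  · simp only [mem_singleton_iff]
    intro h; rw [h] at hw; norm_num at hw

lemma isPreconnected_U : IsPreconnected U := by
  have hbase : (-(1/8 : ℂ) : ℂ) ∈ U := by
    constructor
    · simp only [mem_setOf_eq]; norm_num
    · simp only [mem_singleton_iff]
      intro h
      have := congrArg Complex.re h
      simp at this
      norm_num at this
  -- every point of U can be joined to the base point within U by one or two segments
  have key : ∀ u ∈ U, ∃ S : Set ℂ, S ⊆ U ∧ IsPreconnected S ∧ (-(1/8 : ℂ)) ∈ S ∧ u ∈ S := by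
    intro u hu
    obtain ⟨hure, hune⟩ := hu
    simp only [mem_setOf_eq] at hure
    simp only [mem_singleton_iff] at hune
    by_cases him : u.im = 0 ∧ 1 < u.re
    · -- go via I
      refine ⟨segment ℝ (-(1/8 : ℂ)) Complex.I ∪ segment ℝ Complex.I u, ?_, ?_, ?_, ?_⟩
      · rintro p (hp | hp)
        · constructor
          · have : p ∈ {s : ℂ | -(1/4 : ℝ) < s.re} := by
              apply convex_halfSpace_re_gt (-(1/4 : ℝ)) |>.segment_subset ?_ ?_ hp
              · simp only [mem_setOf_eq]; norm_num
              · simp only [mem_setOf_eq, Complex.I_re]; norm_num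
            exact this
          · simp only [mem_singleton_iff]
            intro hp1
            obtain ⟨a, b, ha, hb, hab, hsum⟩ := hp
            rw [hp1] at hsum
            have him1 := congrArg Complex.im hsum
            simp [Complex.add_im, Complex.smul_re] at him1
            -- im of a•(-1/8) + b•I = b
            have hb0 : b = 0 := by
              simpa using him1
            have hre1 := congrArg Complex.re hsum
            rw [hb0] at hab hre1
            simp at hab hre1
            rw [hab] at hre1
            norm_num at hre1
        · constructor
          · have : p ∈ {s : ℂ | -(1/4 : ℝ) < s.re} := by
              apply convex_halfSpace_re_gt (-(1/4 : ℝ)) |>.segment_subset ?_ ?_ hp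
              · simp only [mem_setOf_eq, Complex.I_re]; norm_num
              · simp only [mem_setOf_eq]; linarith
            exact this
          · simp only [mem_singleton_iff]
            intro hp1
            obtain ⟨a, b, ha, hb, hab, hsum⟩ := hp
            rw [hp1] at hsum
            have him1 := congrArg Complex.im hsum
            simp [Complex.add_im, Complex.smul_re, him.1] at him1
            -- im = a
            have ha0 : a = 0 := by simpa [him.1] using him1
            rw [ha0] at hab hsum
            simp at hab hsum
            rw [hab] at hsum
            simp at hsum
            exact hune hsum
      · apply IsPreconnected.union Complex.I
        · exact right_mem_segment ℝ _ _
        · exact left_mem_segment ℝ _ _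
        · exact (convex_segment _ _).isPreconnected
        · exact (convex_segment _ _).isPreconnected
      · exact Or.inl (left_mem_segment ℝ _ _)
      · exact Or.inr (right_mem_segment ℝ _ _)
    · -- direct segment
      refine ⟨segment ℝ (-(1/8 : ℂ)) u, ?_, (convex_segment _ _).isPreconnected,
        left_mem_segment ℝ _ _, right_mem_segment ℝ _ _⟩
      intro p hp
      constructor
      · have : p ∈ {s : ℂ | -(1/4 : ℝ) < s.re} := by
          apply convex_halfSpace_re_gt (-(1/4 : ℝ)) |>.segment_subset ?_ ?_ hp
          · simp only [mem_setOf_eq]; norm_num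
          · simp only [mem_setOf_eq]; linarith
        exact this
      · simp only [mem_singleton_iff]
        intro hp1
        obtain ⟨a, b, ha, hb, hab, hsum⟩ := hp
        rw [hp1] at hsum
        have him1 := congrArg Complex.im hsum
        simp [Complex.add_im] at him1
        -- b * u.im = 0
        rcases him1 with hb0 | huim
        · rw [hb0] at hab hsum
          simp at hab hsum
          rw [hab] at hsum
          simp at hsum
          norm_num at hsum
          -- 1 = -(1/8) impossible
        · -- u.im = 0, so u.re ≤ 1, u.re ≠ 1
          have hure1 : u.re < 1 := by
            rcases lt_or_ge u.re 1 with h | h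
            · exact h
            · exfalso
              rcases eq_or_lt_of_le h with h1 | h1
              · apply hune
                apply Complex.ext
                · exact h1.symm
                · simp [huim]
              · exact him ⟨huim, h1⟩
          have hre1 := congrArg Complex.re hsum
          simp [Complex.add_re] at hre1
          -- a * (-(1/8)) + b * u.re = 1, with a + b = 1, a,b ≥ 0: contradiction
          nlinarith [ha, hb, hab, hre1, hure1]
  choose S hSU hSconn hSbase hSmem using key
  have hU_eq : U = ⋃₀ {T | ∃ u, ∃ hu : u ∈ U, T = S u hu} := by
    apply Subset.antisymm
    · intro u hu
      exact ⟨S u hu, ⟨u, hu, rfl⟩, hSmem u hu⟩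
    · rintro p ⟨T, ⟨u, hu, rfl⟩, hp⟩
      exact hSU u hu hp
  rw [hU_eq]
  apply isPreconnected_sUnion (-(1/8 : ℂ))
  · rintro T ⟨u, hu, rfl⟩; exact hSbase u hu
  · rintro T ⟨u, hu, rfl⟩; exact hSconn u hu

/-- summable uniform bound for `psi` on a small ball inside `U`. -/
lemma psi_ball_bound {x : ℝ} (hx : 0 < x) {z : ℂ} {r : ℝ} (hr0 : 0 < r) (hr : r ≤ 1/2)
    (hzre : -(3/4 : ℝ) < z.re - r) (hball : Metric.ball z r ⊆ U) :
    ∃ u : ℕ → ℝ, Summable u ∧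
      ∀ (n : ℕ) (w : ℂ), w ∈ Metric.ball z r → ‖psi x n w‖ ≤ u n := by
  set C : ℝ := (‖z‖ + r) * (‖z‖ + r + 1) / 8 with hC
  set lo : ℝ := -(z.re + r) - 2 with hlo
  set hi : ℝ := -(z.re - r) - 2 with hhi
  have hC0 : 0 ≤ C := by positivity
  refine ⟨fun n => C * (((n : ℝ) + x) ^ lo + ((n : ℝ) + x) ^ hi), ?_, ?_⟩
  · apply Summable.mul_left
    have h1 : Summable (fun n : ℕ => ((n : ℝ) + x) ^ lo) := by
      have := summable_rpow_shift hx (p := -lo) (by rw [hlo]; linarith)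
      simpa using this
    have h2 : Summable (fun n : ℕ => ((n : ℝ) + x) ^ hi) := by
      have := summable_rpow_shift hx (p := -hi) (by rw [hhi]; linarith)
      simpa using this
    exact h1.add h2
  · intro n w hw
    have hwU := hball hw
    have hw1 : w ≠ 1 := fun h => hwU.2 (by simp [h])
    rw [Metric.mem_ball] at hw
    have habs : ‖w‖ ≤ ‖z‖ + r := by
      have h1 : ‖w‖ - ‖z‖ ≤ ‖w - z‖ := norm_sub_norm_le w z
      have hd : ‖w - z‖ < r := by
        rwa [Complex.dist_eq] at hw
      linarith
    have hre : |w.re - z.re| < r := by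
      have h1 : |(w - z).re| ≤ ‖w - z‖ := Complex.abs_re_le_norm _
      have hd : ‖w - z‖ < r := by rwa [Complex.dist_eq] at hw
      rw [Complex.sub_re] at h1
      linarith
    have hre1 := abs_lt.1 hre
    have hwre2 : -2 ≤ w.re := by linarith [hre1.1]
    calc ‖psi x n w‖ ≤ ‖w‖ * ‖w + 1‖ / 8 * ((n : ℝ) + x) ^ (-w.re - 2) :=
          psi_bound x hx n w hw1 hwre2
      _ ≤ C * (((n : ℝ) + x) ^ lo + ((n : ℝ) + x) ^ hi) := by
          apply mul_le_mul
          · rw [hC]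
            apply div_le_div_of_nonneg_right ?_ (by norm_num)
            apply mul_le_mul habs ?_ (norm_nonneg _) (by positivity)
            calc ‖w + 1‖ ≤ ‖w‖ + 1 := by
                  simpa using norm_add_le w 1
              _ ≤ ‖z‖ + r + 1 := by linarith
          · exact rpow_le_add (by positivity) (by rw [hlo]; linarith [hre1.2])
              (by rw [hhi]; linarith [hre1.1])
          · positivity
          · exact hC0
  
noncomputable def G (x : ℝ) (s : ℂ) : ℂ :=
  ((x : ℝ) : ℂ) ^ (-s) / 2 + ((x : ℝ) : ℂ) ^ (1 - s) / (s - 1) + ∑' n, psi x n s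

lemma G_differentiableOn {x : ℝ} (hx : 0 < x) : DifferentiableOn ℂ (G x) U := by
  have hx0 : ((x : ℝ) : ℂ) ≠ 0 := by simp [ne_of_gt hx]
  have h1 : DifferentiableOn ℂ (fun s : ℂ => ((x : ℝ) : ℂ) ^ (-s) / 2) U := by
    apply Differentiable.differentiableOn
    exact (differentiable_neg.const_cpow (Or.inl hx0)).div_const 2
  have h2 : DifferentiableOn ℂ (fun s : ℂ => ((x : ℝ) : ℂ) ^ (1 - s) / (s - 1)) U := by
    intro z hz
    apply DifferentiableAt.differentiableWithinAt
    have hz1 : z - 1 ≠ 0 := sub_ne_zero.2 (fun h => hz.2 (by simp [h]))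
    exact (((differentiable_const (1:ℂ)).sub differentiable_id).differentiableAt.const_cpow
      (Or.inl hx0)).div (differentiableAt_id.sub (differentiableAt_const 1)) hz1
  have h3 : DifferentiableOn ℂ (fun s : ℂ => ∑' n, psi x n s) U := by
    intro z hz
    obtain ⟨ε, hε0, hεball⟩ := Metric.isOpen_iff.1 isOpen_U z hz
    set r : ℝ := min (ε / 2) (1/2) with hr
    have hr0 : 0 < r := by positivity
    have hrhalf : r ≤ 1/2 := min_le_right _ _
    have hrball : Metric.ball z r ⊆ U := fun w hw => hεball
      (Metric.ball_subset_ball (by rw [hr]; calc min (ε/2) (1/2) ≤ ε/2 := min_le_left _ _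
        _ ≤ ε := by linarith) hw)
    have hzre : -(3/4 : ℝ) < z.re - r := by
      have := hz.1
      simp only [mem_setOf_eq] at this
      linarith [hrhalf]
    obtain ⟨u, hu, hub⟩ := psi_ball_bound hx hr0 hrhalf hzre hrball
    have := differentiableOn_tsum_of_summable_norm hu
      (fun n => fun w hw => (psi_differentiableAt hx n
        (fun h => (hrball hw).2 (by simp [h]))).differentiableWithinAt)
      Metric.isOpen_ball (fun i w hw => hub i w hw)
    exact (this.differentiableAt (Metric.isOpen_ball.mem_nhds
      (Metric.mem_ball_self hr0))).differentiableWithinAt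
  exact (h1.add h2).add h3

lemma hasSum_deriv_psi_zero {x : ℝ} (hx : 0 < x) :
    HasSum (fun n => deriv (psi x n) 0) (deriv (fun s : ℂ => ∑' n, psi x n s) 0) := by
  have hball : Metric.ball (0 : ℂ) (1/4) ⊆ U := by
    intro w hw
    rw [Metric.mem_ball, dist_zero_right] at hw
    constructor
    · simp only [mem_setOf_eq]
      have : |w.re| < 1/4 := lt_of_le_of_lt (Complex.abs_re_le_norm w) hw
      linarith [(abs_lt.1 this).1]
    · simp only [mem_singleton_iff]
      intro h; rw [h] at hw; norm_num at hw
  have h0re : -(3/4 : ℝ) < (0 : ℂ).re - 1/4 := by norm_num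
  obtain ⟨u, hu, hub⟩ := psi_ball_bound hx (show (0:ℝ) < 1/4 by norm_num)
    (by norm_num) h0re hball
  exact hasSum_deriv_of_summable_norm hu
    (fun n => fun w hw => (psi_differentiableAt hx n
      (fun h => (hball hw).2 (by simp [h]))).differentiableWithinAt)
    Metric.isOpen_ball (fun i w hw => hub i w hw)
    (Metric.mem_ball_self (by norm_num))

lemma psi_tsum_differentiableAt_zero {x : ℝ} (hx : 0 < x) :
    DifferentiableAt ℂ (fun s : ℂ => ∑' n, psi x n s) 0 := by
  have hball : Metric.ball (0 : ℂ) (1/4) ⊆ U := ball_subset_U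
  have h0re : -(3/4 : ℝ) < (0 : ℂ).re - 1/4 := by norm_num
  obtain ⟨u, hu, hub⟩ := psi_ball_bound hx (show (0:ℝ) < 1/4 by norm_num)
    (by norm_num) h0re hball
  have hdo := differentiableOn_tsum_of_summable_norm hu
    (fun n => fun w hw => (psi_differentiableAt hx n
      (fun h => (hball hw).2 (by simp [h]))).differentiableWithinAt)
    Metric.isOpen_ball (fun i w hw => hub i w hw)
  exact hdo.differentiableAt (Metric.isOpen_ball.mem_nhds (Metric.mem_ball_self (by norm_num)))

/-- The regularized partial log-product. -/
noncomputable def E (x : ℝ) (N : ℕ) : ℝ :=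
  (∑ n ∈ Finset.range N, Real.log ((n : ℝ) + x))
    - ((N : ℝ) + x - 1/2) * Real.log ((N : ℝ) + x) + ((N : ℝ) + x)

lemma key_identity (x : ℝ) (hx : 0 < x) (N : ℕ) (hN : 1 ≤ N) :
    Real.exp (E x N) * Real.GammaSeq x N
      = Stirling.stirlingSeq N * Real.sqrt 2
          * Real.exp (x - ((N : ℝ) + x + 1/2) * (Real.log ((N : ℝ) + x) - Real.log N)) := by
  have hN0 : (0:ℝ) < (N : ℝ) := by exact_mod_cast hN
  have hNx : (0:ℝ) < (N : ℝ) + x := by linarith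
  have hfact : (0:ℝ) < (Nat.factorial N : ℝ) := by exact_mod_cast Nat.factorial_pos N
  have hprod : (0:ℝ) < ∏ j ∈ Finset.range (N + 1), (x + (j : ℝ)) := by
    apply Finset.prod_pos; intro j _; positivity
  have hGS : (0:ℝ) < Real.GammaSeq x N := by
    rw [Real.GammaSeq]; positivity
  have hst : (0:ℝ) < Stirling.stirlingSeq N := by
    obtain ⟨M, rfl⟩ := Nat.exists_eq_add_of_le hN
    simpa [add_comm] using Stirling.stirlingSeq'_pos M
  have hL : (0:ℝ) < Real.exp (E x N) * Real.GammaSeq x N := by positivity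
  have hR : (0:ℝ) < Stirling.stirlingSeq N * Real.sqrt 2
      * Real.exp (x - ((N : ℝ) + x + 1/2) * (Real.log ((N : ℝ) + x) - Real.log N)) := by
    positivity
  rw [← Real.exp_log hL, ← Real.exp_log hR]
  congr 1
  rw [Real.log_mul (by positivity) (ne_of_gt hGS), Real.log_exp,
    Real.log_mul (by positivity) (by positivity),
    Real.log_mul (ne_of_gt hst) (by positivity), Real.log_exp]
  rw [Real.GammaSeq, Real.log_div (by positivity) (ne_of_gt hprod),
    Real.log_mul (by positivity) (ne_of_gt hfact),
    Real.log_rpow hN0, Real.log_prod (fun j _ => by positivity)]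
  rw [Stirling.stirlingSeq, Real.log_div (ne_of_gt hfact) (by positivity),
    Real.log_mul (by positivity) (by positivity), Real.log_sqrt (by positivity),
    Real.log_mul (by norm_num) (ne_of_gt hN0), Real.log_pow, Real.log_div (ne_of_gt hN0)
      (ne_of_gt (Real.exp_pos 1)), Real.log_exp, Real.log_sqrt (by norm_num)]
  rw [E, Finset.sum_range_succ]
  have hcongr : ∑ j ∈ Finset.range N, Real.log (x + (j : ℝ))
      = ∑ n ∈ Finset.range N, Real.log ((n : ℝ) + x) :=
    Finset.sum_congr rfl fun i _ => by rw [add_comm]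
  rw [hcongr, show Real.log (x + (N : ℝ)) = Real.log ((N : ℝ) + x) by rw [add_comm]]
  ring

lemma tendsto_exp_part (x : ℝ) (hx : 0 < x) :
    Tendsto (fun N : ℕ => x - ((N : ℝ) + x + 1/2) * (Real.log ((N : ℝ) + x) - Real.log N))
      atTop (𝓝 0) := by
  have h1 : Tendsto (fun N : ℕ => ((N : ℝ)) * Real.log (1 + x / N)) atTop (𝓝 x) :=
    (Real.tendsto_mul_log_one_add_div_atTop x).comp tendsto_natCast_atTop_atTop
  have h2 : Tendsto (fun N : ℕ => Real.log (1 + x / N)) atTop (𝓝 0) := by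
    have ha : Tendsto (fun N : ℕ => 1 + x / (N : ℝ)) atTop (𝓝 1) := by
      have := (tendsto_const_nhds (x := x) (f := atTop (α := ℕ))).div_atTop
        tendsto_natCast_atTop_atTop
      simpa using (tendsto_const_nhds (x := (1:ℝ)) (f := atTop (α := ℕ))).add this
    have := (Real.continuousAt_log (by norm_num : (1:ℝ) ≠ 0)).tendsto.comp ha
    rw [Real.log_one] at this
    exact this
  have h3 : Tendsto (fun N : ℕ => ((N : ℝ) + x + 1/2) * Real.log (1 + x / N))
      atTop (𝓝 x) := by
    have := h1.add ((h2.const_mul (x + 1/2)))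
    have heq : (fun N : ℕ => ((N : ℝ)) * Real.log (1 + x / N)
        + (x + 1/2) * Real.log (1 + x / N))
        = fun N : ℕ => ((N : ℝ) + x + 1/2) * Real.log (1 + x / N) := by
      funext N; ring
    rw [heq] at this
    simpa using this
  have h4 : ∀ᶠ N : ℕ in atTop, Real.log ((N : ℝ) + x) - Real.log N = Real.log (1 + x / N) := by
    filter_upwards [eventually_ge_atTop 1] with N hN
    have hN0 : (0:ℝ) < (N : ℝ) := by exact_mod_cast hN
    rw [← Real.log_div (by positivity) (ne_of_gt hN0)]
    congr 1
    field_simp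
  have h5 : Tendsto (fun N : ℕ => ((N : ℝ) + x + 1/2) * (Real.log ((N : ℝ) + x) - Real.log N))
      atTop (𝓝 x) := by
    apply h3.congr'
    filter_upwards [h4] with N hN
    rw [hN]
  have := (tendsto_const_nhds (x := x) (f := atTop (α := ℕ))).sub h5
  simpa using this

lemma tendsto_exp_E (x : ℝ) (hx : 0 < x) :
    Tendsto (fun N : ℕ => Real.exp (E x N)) atTop
      (𝓝 (Real.sqrt (2 * Real.pi) / Real.Gamma x)) := by
  have hA : Tendsto (fun N : ℕ => Real.exp (E x N) * Real.GammaSeq x N) atTop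
      (𝓝 (Real.sqrt (2 * Real.pi))) := by
    have hlim : Tendsto (fun N : ℕ => Stirling.stirlingSeq N * Real.sqrt 2
        * Real.exp (x - ((N : ℝ) + x + 1/2) * (Real.log ((N : ℝ) + x) - Real.log N))) atTop
        (𝓝 (Real.sqrt Real.pi * Real.sqrt 2 * Real.exp 0)) :=
      ((Stirling.tendsto_stirlingSeq_sqrt_pi.mul_const (Real.sqrt 2)).mul
        ((Real.continuous_exp.tendsto 0).comp (tendsto_exp_part x hx)))
    have heq : Real.sqrt Real.pi * Real.sqrt 2 * Real.exp 0 = Real.sqrt (2 * Real.pi) := by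
      rw [Real.exp_zero, mul_one, Real.sqrt_mul (by norm_num : (0:ℝ) ≤ 2), mul_comm]
    rw [heq] at hlim
    apply hlim.congr'
    filter_upwards [eventually_ge_atTop 1] with N hN
    exact (key_identity x hx N hN).symm
  have hGamma := Real.GammaSeq_tendsto_Gamma x
  have hGne : Real.Gamma x ≠ 0 := ne_of_gt (Real.Gamma_pos_of_pos hx)
  have hdiv := hA.div hGamma hGne
  apply hdiv.congr'
  filter_upwards [eventually_ge_atTop 1] with N hN
  have hGS : (0:ℝ) < Real.GammaSeq x N := by
    rw [Real.GammaSeq]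
    have hN0 : (0:ℝ) < (N : ℝ) := by exact_mod_cast hN
    have hfact : (0:ℝ) < (Nat.factorial N : ℝ) := by exact_mod_cast Nat.factorial_pos N
    have hprod : (0:ℝ) < ∏ j ∈ Finset.range (N + 1), (x + (j : ℝ)) := by
      apply Finset.prod_pos; intro j _; positivity
    positivity
  simp only [Pi.div_apply]
  rw [mul_div_assoc, div_self (ne_of_gt hGS), mul_one]

lemma psid_sum (x : ℝ) (N : ℕ) : ∑ n ∈ Finset.range N, psid x n
    = ((N : ℝ) + x) * Real.log ((N : ℝ) + x) - x * Real.log x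
      - (∑ n ∈ Finset.range N, Real.log ((n : ℝ) + x))
      - (Real.log ((N : ℝ) + x) - Real.log x) / 2 - N := by
  induction N with
  | zero => simp
  | succ N ih =>
    rw [Finset.sum_range_succ, Finset.sum_range_succ, ih, psid]
    push_cast
    rw [show (N : ℝ) + 1 + x = (N : ℝ) + x + 1 by ring]
    ring

lemma eqOn_F_G {x : ℝ} (hx : 0 < x) (F : ℂ → ℂ)
    (hFeq : ∀ w : ℂ, 1 < w.re → F w = ∑' n : ℕ, ((n : ℂ) + (x : ℂ)) ^ (-w)) :
    EqOn F (G x) {s : ℂ | 1 < s.re} := by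
  intro s hs
  simp only [mem_setOf_eq] at hs
  have hZ : HasSum (ff x s) (F s) := by
    have hsum : Summable (ff x s) := summable_ff hx hs
    have h2 := hsum.hasSum
    rwa [show ∑' n, ff x s n = F s from ?_] at h2
    rw [hFeq s hs]
    apply tsum_congr
    intro n
    rw [ff]
    norm_cast
  have hpsi := hasSum_psi hx hs hZ
  rw [G, hpsi.tsum_eq]
  ring

theorem deriv_F_eq {x : ℝ} (hx : 0 < x) (F : ℂ → ℂ)
    (hF : ∀ w : ℂ, w ≠ 1 → DifferentiableAt ℂ F w)
    (hFeq : ∀ w : ℂ, 1 < w.re → F w = ∑' n : ℕ, ((n : ℂ) + (x : ℂ)) ^ (-w)) :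
    deriv F 0 = deriv (G x) 0 := by
  have hFanal : AnalyticOnNhd ℂ F U := by
    apply DifferentiableOn.analyticOnNhd _ isOpen_U
    intro w hw
    exact (hF w (fun h => hw.2 (by simp [h]))).differentiableWithinAt
  have hGanal : AnalyticOnNhd ℂ (G x) U :=
    (G_differentiableOn hx).analyticOnNhd isOpen_U
  have h2U : (2 : ℂ) ∈ U := mem_U_of_one_lt (by norm_num)
  have hev : F =ᶠ[𝓝 (2 : ℂ)] G x := by
    have hopen : IsOpen {s : ℂ | 1 < s.re} := isOpen_lt continuous_const Complex.continuous_re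
    filter_upwards [hopen.mem_nhds (by norm_num : (2:ℂ) ∈ {s : ℂ | 1 < s.re})] with w hw
    exact eqOn_F_G hx F hFeq hw
  have heqU : EqOn F (G x) U :=
    hFanal.eqOn_of_preconnected_of_eventuallyEq hGanal isPreconnected_U h2U hev
  have hev0 : F =ᶠ[𝓝 (0 : ℂ)] G x := by
    filter_upwards [isOpen_U.mem_nhds (ball_subset_U (Metric.mem_ball_self (by norm_num)))]
      with w hw
    exact heqU hw
  exact hev0.deriv_eq

theorem deriv_G_eval {x : ℝ} (hx : 0 < x) :
    Tendsto (fun N : ℕ => ((E x N : ℝ) : ℂ)) atTop (𝓝 (-(deriv (G x) 0))) := by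
  have hx0 : ((x : ℝ) : ℂ) ≠ 0 := by simp [ne_of_gt hx]
  have hlog : Complex.log ((x : ℝ) : ℂ) = ((Real.log x : ℝ) : ℂ) :=
    (Complex.ofReal_log hx.le).symm
  have hneg : HasDerivAt (fun s : ℂ => -s) (-1) (0 : ℂ) := (hasDerivAt_id (0:ℂ)).neg
  have h1 : HasDerivAt (fun s : ℂ => ((x : ℝ) : ℂ) ^ (-s) / 2)
      ((-(Real.log x) / 2 : ℝ) : ℂ) 0 := by
    have := (hneg.const_cpow (c := ((x : ℝ) : ℂ)) (Or.inl hx0)).div_const 2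
    simp only [neg_zero, Complex.cpow_zero, one_mul, mul_neg_one] at this
    refine this.congr_deriv ?_
    rw [hlog]; push_cast; ring
  have honess : HasDerivAt (fun s : ℂ => 1 - s) (-1) (0 : ℂ) := by
    simpa using ((hasDerivAt_id (0:ℂ)).const_sub 1)
  have h2 : HasDerivAt (fun s : ℂ => ((x : ℝ) : ℂ) ^ (1 - s) / (s - 1))
      ((x * Real.log x - x : ℝ) : ℂ) 0 := by
    have hu := honess.const_cpow (c := ((x : ℝ) : ℂ)) (Or.inl hx0)
    have hv : HasDerivAt (fun s : ℂ => s - 1) 1 (0 : ℂ) := (hasDerivAt_id (0:ℂ)).sub_const 1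
    have hden : ((0 : ℂ) - 1) ≠ 0 := by norm_num
    have H := hu.div hv hden
    have hval : ((x:ℝ):ℂ) ^ ((1:ℂ) - 0) = (x:ℂ) := by simp [Complex.cpow_one]
    refine H.congr_deriv ?_
    rw [hlog, hval]
    push_cast
    field_simp
    ring
  have hdT := psi_tsum_differentiableAt_zero hx
  have hGd : HasDerivAt (G x) (((-(Real.log x) / 2 : ℝ) : ℂ) + ((x * Real.log x - x : ℝ) : ℂ)
      + deriv (fun s : ℂ => ∑' n, psi x n s) 0) 0 := by
    unfold G
    exact (h1.add h2).add hdT.hasDerivAt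
  have hGderiv : deriv (G x) 0 = ((-(Real.log x) / 2 : ℝ) : ℂ)
      + ((x * Real.log x - x : ℝ) : ℂ) + deriv (fun s : ℂ => ∑' n, psi x n s) 0 := hGd.deriv
  -- partial sums of the derivative series
  have hpart := (hasSum_deriv_psi_zero hx).tendsto_sum_nat
  have hpart2 : Tendsto (fun N : ℕ => ((∑ n ∈ Finset.range N, psid x n : ℝ) : ℂ)) atTop
      (𝓝 (deriv (fun s : ℂ => ∑' n, psi x n s) 0)) := by
    apply hpart.congr
    intro N
    rw [Complex.ofReal_sum]
    apply Finset.sum_congr rfl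
    intro n _
    exact (psi_hasDerivAt_zero hx n).deriv
  -- E in terms of the partial sums
  have hE_eq : ∀ N : ℕ, ((E x N : ℝ) : ℂ)
      = ((Real.log x / 2 + (x - x * Real.log x) : ℝ) : ℂ)
        - ((∑ n ∈ Finset.range N, psid x n : ℝ) : ℂ) := by
    intro N
    rw [← Complex.ofReal_sub]
    congr 1
    rw [psid_sum, E]
    ring
  have hlim := tendsto_const_nhds (x := ((Real.log x / 2 + (x - x * Real.log x) : ℝ) : ℂ))
    (f := atTop (α := ℕ)) |>.sub hpart2
  rw [funext hE_eq]
  convert hlim using 2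
  rw [hGderiv]
  push_cast
  ring

theorem lerch_main (x : ℝ) (hx : 0 < x) (F : ℂ → ℂ)
    (hF : ∀ w : ℂ, w ≠ 1 → DifferentiableAt ℂ F w)
    (hFeq : ∀ w : ℂ, 1 < w.re → F w = ∑' n : ℕ, ((n : ℂ) + (x : ℂ)) ^ (-w)) :
    Complex.exp (-(deriv F 0)) = (Real.sqrt (2 * Real.pi) : ℂ) / Complex.Gamma (x : ℂ) := by
  have hGpos : 0 < Real.Gamma x := Real.Gamma_pos_of_pos hx
  have hqpos : 0 < Real.sqrt (2 * Real.pi) / Real.Gamma x := by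
    exact div_pos (Real.sqrt_pos.2 (by positivity)) hGpos
  set L : ℝ := Real.log (Real.sqrt (2 * Real.pi) / Real.Gamma x) with hL
  have hEL : Tendsto (fun N : ℕ => E x N) atTop (𝓝 L) := by
    have hcomp := (Real.continuousAt_log (ne_of_gt hqpos)).tendsto.comp (tendsto_exp_E x hx)
    apply hcomp.congr
    intro N
    simp [Real.log_exp]
  have hELC : Tendsto (fun N : ℕ => ((E x N : ℝ) : ℂ)) atTop (𝓝 ((L : ℝ) : ℂ)) :=
    (Complex.continuous_ofReal.tendsto L).comp hEL
  have hderiv : -(deriv F 0) = ((L : ℝ) : ℂ) := by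
    have h1 := deriv_G_eval hx
    rw [← deriv_F_eq hx F hF hFeq] at h1
    exact tendsto_nhds_unique h1 hELC
  rw [hderiv, ← Complex.ofReal_exp, Real.exp_log hqpos, Complex.ofReal_div,
    Complex.Gamma_ofReal]

end LerchAux

/-- Lerch's 1894 formula: the zeta regularized product `∏_{n=0}^∞ (n + x) = √(2π)/Γ(x)`,
where the left-hand side is `exp(−F′(0))` for `F` the analytic continuation of the
Hurwitz zeta function `w ↦ ∑_{n=0}^∞ (n+x)^(−w)`. -/
theorem lerch_formula (x : ℝ) (hx : 0 < x) (F : ℂ → ℂ)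
    (hF : ∀ w : ℂ, w ≠ 1 → DifferentiableAt ℂ F w)
    (hFeq : ∀ w : ℂ, 1 < w.re → F w = ∑' n : ℕ, ((n : ℂ) + (x : ℂ)) ^ (-w)) :
    Complex.exp (-(deriv F 0)) = (Real.sqrt (2 * Real.pi) : ℂ) / Complex.Gamma (x : ℂ) :=
  LerchAux.lerch_main x hx F hF hFeq
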